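/- Let R be a commutative ring with identity. The following statements are equivalent: (1) every nonzero R-module has a maximal submodule; (2) every nonzero R-module has a strongly prime submodule; (3) every nonzero R-module has a prime submodule; (4) every nonzero R-module has a semiprime submodule. -/

import Mathlib

universe u v

/-- A proper submodule `P` of `M` is *strongly prime* if whenever
`I_x^P • y ⊆ P` (where `I_x^P = (P + Rx : M)`), either `x ∈ P` or `y ∈ P`. -/
def Submodule.IsStronglyPrime {R M : Type*} [CommRing R] [AddCommGroup M] [Module R M]
    (P : Submodule R M) : Prop :=
  P ≠ ⊤ ∧ ∀ x y : M,
    (∀ r : R, (∀ m : M, r • m ∈ P ⊔ Submodule.span R {x}) → r • y ∈ P) → x ∈ P ∨ y ∈ P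

/-- A proper submodule `N` of `M` is *prime* if `r • x ∈ N` implies `x ∈ N` or `r • M ⊆ N`. -/
def Submodule.IsPrimeSubmodule {R M : Type*} [CommRing R] [AddCommGroup M] [Module R M]
    (N : Submodule R M) : Prop :=
  N ≠ ⊤ ∧ ∀ (r : R) (x : M), r • x ∈ N → x ∈ N ∨ ∀ m : M, r • m ∈ N

/-- A proper submodule `N` of `M` is *semiprime* if `r² • x ∈ N` implies `r • x ∈ N`. -/
def Submodule.IsSemiprimeSubmodule {R M : Type*} [CommRing R] [AddCommGroup M] [Module R M]
    (N : Submodule R M) : Prop :=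
  N ≠ ⊤ ∧ ∀ (r : R) (x : M), (r * r) • x ∈ N → r • x ∈ N

section Aux

variable {R : Type u} [CommRing R]

/-- A maximal submodule is strongly prime. -/
private lemma isStronglyPrime_of_isCoatom {M : Type*} [AddCommGroup M] [Module R M]
    {P : Submodule R M} (hP : IsCoatom P) : P.IsStronglyPrime := by
  refine ⟨hP.1, fun x y hxy => ?_⟩
  by_cases hx : x ∈ P
  · exact Or.inl hx
  · have hsup : P ⊔ Submodule.span R {x} = ⊤ := by
      refine hP.2 _ (lt_of_le_of_ne le_sup_left fun h => hx ?_)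
      exact h ▸ Submodule.mem_sup_right (Submodule.mem_span_singleton_self x)
    have := hxy 1 (fun m => by rw [hsup]; exact Submodule.mem_top)
    simpa using Or.inr this

/-- A strongly prime submodule is prime. -/
private lemma isPrimeSubmodule_of_isStronglyPrime {M : Type*} [AddCommGroup M] [Module R M]
    {P : Submodule R M} (hP : P.IsStronglyPrime) : P.IsPrimeSubmodule := by
  refine ⟨hP.1, fun r x hrx => ?_⟩
  by_cases hx : x ∈ P
  · exact Or.inl hx
  · refine Or.inr fun m' => ?_
    have key : ∀ s : R, (∀ w : M, s • w ∈ P ⊔ Submodule.span R {x}) → s • (r • m') ∈ P := by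
      intro s hs
      rcases Submodule.mem_sup.mp (hs m') with ⟨p, hp, q, hq, heq⟩
      rcases Submodule.mem_span_singleton.mp hq with ⟨t, rfl⟩
      have h2 : s • (r • m') = r • p + t • (r • x) := by
        rw [smul_comm s r m', ← heq, smul_add, smul_comm r t x]
      rw [h2]
      exact Submodule.add_mem _ (Submodule.smul_mem _ _ hp) (Submodule.smul_mem _ _ hrx)
    rcases hP.2 x (r • m') key with h | h
    · exact absurd h hx
    · exact h

/-- A prime submodule is semiprime. -/
private lemma isSemiprimeSubmodule_of_isPrimeSubmodule {M : Type*} [AddCommGroup M] [Module R M]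
    {P : Submodule R M} (hP : P.IsPrimeSubmodule) : P.IsSemiprimeSubmodule := by
  refine ⟨hP.1, fun r x hx => ?_⟩
  rw [mul_smul] at hx
  rcases hP.2 r (r • x) hx with h | h
  · exact h
  · exact h x

/-- Pulling back a semiprime submodule along a linear equivalence. -/
private lemma isSemiprime_comap_equiv {M N : Type*} [AddCommGroup M] [Module R M]
    [AddCommGroup N] [Module R N] (e : M ≃ₗ[R] N) {P : Submodule R N}
    (hP : P.IsSemiprimeSubmodule) :
    (P.comap (e : M →ₗ[R] N)).IsSemiprimeSubmodule := by
  constructor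
  · intro h
    apply hP.1
    rw [Submodule.eq_top_iff']
    intro y
    have : e.symm y ∈ P.comap (e : M →ₗ[R] N) := h ▸ Submodule.mem_top
    simpa using this
  · intro r x hx
    simp only [Submodule.mem_comap, LinearEquiv.coe_coe, map_smul] at hx ⊢
    exact hP.2 r (e x) hx

/-- In a semiprime submodule, `c ^ k • z ∈ P` implies `c • z ∈ P`. -/
private lemma pow_smul_mem_of_isSemiprime {X : Type*} [AddCommGroup X] [Module R X]
    {P : Submodule R X} (hP : P.IsSemiprimeSubmodule) (c : R) :
    ∀ (k : ℕ) (z : X), c ^ k • z ∈ P → c • z ∈ P := by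
  intro k
  induction k using Nat.strong_induction_on with
  | _ k ih =>
    match k with
    | 0 => exact fun z hz => P.smul_mem c (by simpa using hz)
    | 1 => exact fun z hz => by simpa using hz
    | (k + 2) =>
      intro z hz
      have h1 : (c * c) • (c ^ k • z) ∈ P := by
        rw [smul_smul, show c * c * c ^ k = c ^ (k + 2) by ring]
        exact hz
      have h2 : c ^ (k + 1) • z ∈ P := by
        have := hP.2 c _ h1
        rwa [smul_smul, show c * c ^ k = c ^ (k + 1) by ring] at this
      exact ih (k + 1) (by omega) z h2

/-- The "vector space" lemma: if a maximal ideal kills a module, then any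
nonzero vector avoids some maximal submodule. -/
private lemma exists_coatom_notMem {V : Type*} [AddCommGroup V] [Module R V]
    {m : Ideal R} (hm : m.IsMaximal)
    (hmV : ∀ c ∈ m, ∀ v : V, c • v = 0) {v₀ : V} (hv₀ : v₀ ≠ 0) :
    ∃ U : Submodule R V, IsCoatom U ∧ v₀ ∉ U := by
  have hbot : (⊥ : Submodule R V) ∈ {W : Submodule R V | v₀ ∉ W} := by
    simpa using hv₀
  obtain ⟨W, -, hWmem, hWmax⟩ := zorn_le_nonempty₀ {W : Submodule R V | v₀ ∉ W}
    (fun c hcs hchain y hy => by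
      refine ⟨sSup c, ?_, fun z hz => le_sSup hz⟩
      intro hmem
      rcases (Submodule.mem_sSup_of_directed ⟨y, hy⟩ hchain.directedOn).mp hmem with ⟨W, hWc, hvW⟩
      exact hcs hWc hvW) ⊥ hbot
  refine ⟨W, ⟨fun h => hWmem (h ▸ Submodule.mem_top), fun N hlt => ?_⟩, hWmem⟩
  have hv₀N : v₀ ∈ N := by
    by_contra hvN
    exact hlt.ne (le_antisymm hlt.le (hWmax hvN hlt.le))
  rw [Submodule.eq_top_iff']
  intro t
  by_cases htW : t ∈ W
  · exact hlt.le htW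
  · have hvsup : v₀ ∈ W ⊔ Submodule.span R {t} := by
      by_contra h'
      exact htW (hWmax h' le_sup_left (Submodule.mem_sup_right (Submodule.mem_span_singleton_self t)))
    rcases Submodule.mem_sup.mp hvsup with ⟨w, hw, q, hq, hsum⟩
    rcases Submodule.mem_span_singleton.mp hq with ⟨a, rfl⟩
    have ha : a ∉ m := by
      intro ham
      rw [hmV a ham t, add_zero] at hsum
      exact hWmem (hsum ▸ hw)
    obtain ⟨b, i, him, hbi⟩ := hm.exists_inv ha
    have hat : a • t = v₀ - w := by rw [← hsum]; abel
    have : t = b • (v₀ - w) := by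
      rw [← hat, smul_smul]
      conv_lhs => rw [show t = (1 : R) • t from (one_smul R t).symm, ← hbi]
      rw [add_smul, hmV i him t, add_zero]
    rw [this]
    exact N.smul_mem b (N.sub_mem hv₀N (hlt.le hw))

/-- Criterion for an element of a localized module to be zero. -/
private lemma localizedModule_mk_eq_zero {S : Submonoid R} {M : Type*} [AddCommGroup M]
    [Module R M] {w : M} {s : S} :
    LocalizedModule.mk w s = 0 ↔ ∃ u : S, (u : R) • w = 0 := by
  rw [show (0 : LocalizedModule S M) = LocalizedModule.mk 0 1 from (LocalizedModule.zero_mk 1).symm,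
    LocalizedModule.mk_eq]
  constructor
  · rintro ⟨u, hu⟩
    refine ⟨u, ?_⟩
    simpa [Submonoid.smul_def] using hu
  · rintro ⟨u, hu⟩
    exact ⟨u, by simp [Submonoid.smul_def, hu]⟩

/-- Elements of the localizing submonoid act injectively on the localized module. -/
private lemma localizedModule_smul_cancel {S : Submonoid R} {M : Type*} [AddCommGroup M]
    [Module R M] (u : S) (n : LocalizedModule S M) (h : (u : R) • n = 0) : n = 0 := by
  induction n using LocalizedModule.induction_on with
  | _ w s =>
    rw [LocalizedModule.smul'_mk] at h
    obtain ⟨t, ht⟩ := localizedModule_mk_eq_zero.mp h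
    refine localizedModule_mk_eq_zero.mpr ⟨t * u, ?_⟩
    rw [Submonoid.coe_mul, mul_smul]
    exact ht

/-- Localized modules of small modules are small. -/
private lemma small_localizedModule (S : Submonoid R) (M : Type v)
    [AddCommGroup M] [Module R M] : Small.{v} (LocalizedModule S M) := by
  classical
  let F := {f : M → M // ∃ s : S, f = fun w => (s : R) • w}
  refine small_of_surjective
    (f := fun p : M × F => LocalizedModule.mk p.1 (Classical.choose p.2.2)) ?_
  intro n
  induction n using LocalizedModule.induction_on with
  | _ w s =>
    refine ⟨⟨w, ⟨fun w => (s : R) • w, s, rfl⟩⟩, ?_⟩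
    have hs' := Classical.choose_spec
      (⟨s, rfl⟩ : ∃ t : S, (fun w : M => (s : R) • w) = fun w => (t : R) • w)
    refine LocalizedModule.mk_eq.mpr ⟨1, ?_⟩
    simp only [Submonoid.smul_def, one_smul]
    exact congrFun hs' w


/-- Key witness construction: if `z` is an element of a module `W` which is not
"`c`-divisible along powers" in the sense below, then the Prüfer-like module
`W[1/c] / W` is a nonzero module with no semiprime submodule; together with the
hypothesis that all small nontrivial modules have semiprime submodules, this is absurd. -/
private lemma no_semiprime_of_not_divisible
    (H : ∀ (X : Type (max u v)) [AddCommGroup X] [Module R X] [Small.{v} X], Nontrivial X →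
      ∃ P : Submodule R X, P.IsSemiprimeSubmodule)
    {W : Type (max u v)} [AddCommGroup W] [Module R W] [Small.{v} W]
    (c : R) (z : W) (hnd : ∀ (w : W) (l : ℕ), c ^ (l + 1) • w ≠ c ^ l • z) : False := by
  classical
  set T := Submonoid.powers c with hTdef
  let ρ : Submodule R (LocalizedModule T W) :=
    LinearMap.range (LocalizedModule.mkLinearMap T W)
  let Z := LocalizedModule T W ⧸ ρ
  let cp : ℕ → T := fun j => ⟨c ^ j, ⟨j, rfl⟩⟩
  let ξ : W → ℕ → Z := fun w j => Submodule.Quotient.mk (LocalizedModule.mk w (cp j))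
  have hstep : ∀ (w : W) (j : ℕ), c • ξ w (j + 1) = ξ w j := by
    intro w j
    show c • (Submodule.Quotient.mk _ : Z) = Submodule.Quotient.mk _
    rw [← Submodule.Quotient.mk_smul, LocalizedModule.smul'_mk]
    congr 1
    refine LocalizedModule.mk_eq.mpr ⟨1, ?_⟩
    simp only [one_smul, Submonoid.smul_def]
    show (c ^ j : R) • c • w = (c ^ (j + 1) : R) • w
    rw [smul_smul, ← pow_succ]
  have hzero : ∀ w : W, ξ w 0 = 0 := by
    intro w
    refine (Submodule.Quotient.mk_eq_zero _).mpr ⟨w, ?_⟩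
    rw [LocalizedModule.mkLinearMap_apply]
    congr 1
    exact Subtype.ext (pow_zero c).symm
  have hnz : ξ z 1 ≠ 0 := by
    intro h0
    obtain ⟨w', hw'⟩ := (Submodule.Quotient.mk_eq_zero _).mp h0
    rw [LocalizedModule.mkLinearMap_apply] at hw'
    obtain ⟨u, hu⟩ := LocalizedModule.mk_eq.mp hw'
    obtain ⟨l, hl⟩ := u.2
    simp only [Submonoid.smul_def, one_smul] at hu
    have hl' : c ^ l = (u : R) := hl
    rw [← hl', smul_smul, show ((cp 1 : T) : R) = c ^ 1 from rfl, pow_one, ← pow_succ] at hu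
    exact hnd w' l hu
  haveI : Small.{v} Z := by
    refine small_of_surjective (f := fun p : W × ℕ => ξ p.1 p.2) ?_
    intro ζ
    obtain ⟨l, rfl⟩ := Submodule.Quotient.mk_surjective _ ζ
    induction l using LocalizedModule.induction_on with
    | _ w t =>
      obtain ⟨j, hj⟩ := t.2
      exact ⟨(w, j), by
        show Submodule.Quotient.mk _ = _
        rw [show cp j = t from Subtype.ext hj]⟩
  haveI : Nontrivial Z := ⟨_, _, hnz⟩
  obtain ⟨P, hP⟩ := H Z inferInstance
  have hex : ∃ (w : W) (j : ℕ), ξ w j ∉ P := by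
    have hzeta : ∃ ζ : Z, ζ ∉ P := by
      by_contra h
      push_neg at h
      exact hP.1 (Submodule.eq_top_iff'.mpr h)
    obtain ⟨ζ, hζ⟩ := hzeta
    obtain ⟨l, rfl⟩ := Submodule.Quotient.mk_surjective _ ζ
    revert hζ
    refine LocalizedModule.induction_on ?_ l
    intro w t hmem
    obtain ⟨j, hj⟩ := t.2
    exact ⟨w, j, by
      rwa [show ξ w j = Submodule.Quotient.mk (LocalizedModule.mk w t) by
        show Submodule.Quotient.mk _ = _
        rw [show cp j = t from Subtype.ext hj]]⟩
  obtain ⟨w, j, hwj⟩ := hex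
  have hfind : ∃ j : ℕ, ξ w j ∉ P := ⟨j, hwj⟩
  have hj₀ : ξ w (Nat.find hfind) ∉ P := Nat.find_spec hfind
  have hj₀ne : Nat.find hfind ≠ 0 := by
    intro h
    apply hj₀
    rw [h, hzero w]
    exact P.zero_mem
  obtain ⟨jj, hjj⟩ := Nat.exists_eq_succ_of_ne_zero hj₀ne
  have hjjmem : ξ w jj ∈ P := by
    by_contra h
    exact Nat.find_min hfind (m := jj) (by omega) h
  have hsq : (c * c) • ξ w (jj + 2) ∈ P := by
    rw [mul_smul, hstep w (jj + 1), hstep w jj]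
    exact hjjmem
  have hfin := hP.2 c (ξ w (jj + 2)) hsq
  rw [hstep w (jj + 1)] at hfin
  exact hj₀ (by rwa [hjj])

/-- The key construction for the implication (4) → (1). -/
private lemma exists_coatom_of_semiprime
    (H : ∀ (X : Type v) [AddCommGroup X] [Module R X], Nontrivial X →
      ∃ P : Submodule R X, P.IsSemiprimeSubmodule)
    (M : Type v) [AddCommGroup M] [Module R M] (hM : Nontrivial M) :
    ∃ P : Submodule R M, IsCoatom P := by
  classical
  -- transfer the hypothesis to arbitrary small modules
  have H' : ∀ (X : Type (max u v)) [AddCommGroup X] [Module R X] [Small.{v} X], Nontrivial X →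
      ∃ P : Submodule R X, P.IsSemiprimeSubmodule := by
    intro X _ _ _ hX
    haveI : Nontrivial (Shrink.{v} X) := (equivShrink X).symm.nontrivial
    obtain ⟨P, hP⟩ := H (Shrink.{v} X) inferInstance
    exact ⟨P.comap ((Shrink.linearEquiv.{v} R X).symm : X →ₗ[R] Shrink.{v} X),
      isSemiprime_comap_equiv ((Shrink.linearEquiv.{v} R X).symm) hP⟩
  obtain ⟨x, hx⟩ := exists_ne (0 : M)
  set I : Ideal R := LinearMap.ker (LinearMap.toSpanSingleton R M x) with hIdef
  have hInt : I ≠ ⊤ := by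
    intro h
    have h1 : (1 : R) ∈ I := h ▸ Submodule.mem_top
    rw [hIdef, LinearMap.mem_ker, LinearMap.toSpanSingleton_apply, one_smul] at h1
    exact hx h1
  obtain ⟨m, hm, hIm⟩ := Ideal.exists_le_maximal I hInt
  haveI := hm.isPrime
  set S := m.primeCompl with hSdef
  let N := LocalizedModule S M
  haveI : Small.{v} N := small_localizedModule S M
  have hxN : (LocalizedModule.mk x (1 : S) : N) ≠ 0 := by
    intro h
    obtain ⟨u, hu⟩ := localizedModule_mk_eq_zero.mp h
    have hmem : (u : R) ∈ I := by
      rw [hIdef, LinearMap.mem_ker, LinearMap.toSpanSingleton_apply]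
      exact hu
    exact u.2 (hIm hmem)
  haveI : Nontrivial N := ⟨_, _, hxN⟩
  by_cases hcase : ∃ (z : N) (c : R), c ∈ m ∧ ∀ k : ℕ, c ^ k • z ≠ 0
  · -- Case 1: build a "Prüfer-like" module with no semiprime submodule: contradiction.
    exfalso
    obtain ⟨z, c, hcm, hck⟩ := hcase
    -- the `R_m`-submodule of `N` generated by `z`
    let W : Submodule R N :=
      { carrier := {w | ∃ s a : R, s ∉ m ∧ s • w = a • z}
        add_mem' := by
          rintro w₁ w₂ ⟨s₁, a₁, hs₁, h₁⟩ ⟨s₂, a₂, hs₂, h₂⟩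
          refine ⟨s₁ * s₂, s₂ * a₁ + s₁ * a₂, fun hmem => ?_, ?_⟩
          · rcases hm.isPrime.mem_or_mem hmem with h | h
            exacts [hs₁ h, hs₂ h]
          · rw [smul_add, add_smul, mul_smul, mul_smul, mul_smul, mul_smul,
              smul_comm s₁ s₂ w₁, h₁, h₂]
        zero_mem' := ⟨1, 0, fun hmem => hm.ne_top ((Ideal.eq_top_iff_one m).mpr hmem),
          by simp⟩
        smul_mem' := by
          rintro r w ⟨s, a, hs, hsa⟩
          exact ⟨s, r * a, hs, by rw [smul_comm s r w, hsa, mul_smul]⟩ }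
    have hzW : z ∈ W := ⟨1, 1, fun hmem => hm.ne_top ((Ideal.eq_top_iff_one m).mpr hmem),
      by simp⟩
    haveI : Small.{v} (↥W) := small_of_injective (f := (Subtype.val : ↥W → N))
      Subtype.val_injective
    refine no_semiprime_of_not_divisible H' c (⟨z, hzW⟩ : ↥W) ?_
    intro w l heq
    -- pass to `N`
    have heqN : c ^ (l + 1) • (w : N) = c ^ l • z := by
      have := congrArg (Subtype.val : ↥W → N) heq
      simpa using this
    obtain ⟨s, a, hs, hsa⟩ := w.2
    have hkey : ((s - c * a) * c ^ l) • z = 0 := by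
      have h1 : s • (c ^ (l + 1) • (w : N)) = s • (c ^ l • z) := by rw [heqN]
      rw [smul_comm s (c ^ (l + 1)), hsa] at h1
      -- h1 : c ^ (l + 1) • a • z = s • c ^ l • z
      have h2 : (c ^ (l + 1) * a) • z = (s * c ^ l) • z := by
        rw [mul_smul, mul_smul]; exact h1
      have h3 : ((s - c * a) * c ^ l) • z = (s * c ^ l) • z - (c ^ (l + 1) * a) • z := by
        rw [← sub_smul]; congr 1; ring
      rw [h3, h2, sub_self]
    have hu₀ : s - c * a ∉ m := by
      intro hmem
      apply hs
      have hmem2 : s - c * a + c * a ∈ m := m.add_mem hmem (m.mul_mem_right a hcm)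
      simpa using hmem2
    have hzero := localizedModule_smul_cancel (S := S) ⟨s - c * a, hu₀⟩ (c ^ l • z)
      (by rw [← mul_smul]; exact hkey)
    exact hck l hzero
  · -- Case 2: every element of `m` acts locally nilpotently on `N`.
    push_neg at hcase
    obtain ⟨P, hP⟩ := H' N inferInstance
    set V := N ⧸ P with hVdef
    have hmV : ∀ c ∈ m, ∀ v : V, c • v = 0 := by
      intro c hc v
      obtain ⟨n, rfl⟩ := Submodule.Quotient.mk_surjective P v
      rw [← Submodule.Quotient.mk_smul, Submodule.Quotient.mk_eq_zero]
      obtain ⟨k, hk⟩ := hcase n c hc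
      exact pow_smul_mem_of_isSemiprime hP c k n (hk ▸ P.zero_mem)
    have hexl : ∃ l : N, l ∉ P := by
      by_contra h
      push_neg at h
      exact hP.1 (Submodule.eq_top_iff'.mpr h)
    obtain ⟨l, hl⟩ := hexl
    obtain ⟨w, s, rfl⟩ : ∃ (w : M) (s : S), l = LocalizedModule.mk w s := by
      revert hl
      refine LocalizedModule.induction_on ?_ l
      exact fun w s _ => ⟨w, s, rfl⟩
    set ζ : V := Submodule.Quotient.mk (LocalizedModule.mk w s) with hζdef
    have hζ : ζ ≠ 0 := by
      rw [hζdef, Ne, Submodule.Quotient.mk_eq_zero]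
      exact hl
    set v₀ : V := Submodule.Quotient.mk (LocalizedModule.mk w (1 : S)) with hv₀def
    have hv₀ζ : v₀ = (s : R) • ζ := by
      rw [hv₀def, hζdef, ← Submodule.Quotient.mk_smul]
      congr 1
      rw [LocalizedModule.smul'_mk]
      refine LocalizedModule.mk_eq.mpr ⟨1, ?_⟩
      simp [Submonoid.smul_def, smul_smul, mul_comm]
    have hv₀ : v₀ ≠ 0 := by
      intro h0
      obtain ⟨b, i, him, hbi⟩ := hm.exists_inv (show (s : R) ∉ m from s.2)
      apply hζ
      calc ζ = (b * (s : R) + i) • ζ := by rw [hbi, one_smul]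
        _ = b • ((s : R) • ζ) + i • ζ := by rw [add_smul, mul_smul]
        _ = 0 := by rw [← hv₀ζ, h0, smul_zero, hmV i him ζ, add_zero]
    obtain ⟨U, hU, hvU⟩ := exists_coatom_notMem hm hmV hv₀
    let φ : M →ₗ[R] V ⧸ U := U.mkQ ∘ₗ (P.mkQ ∘ₗ LocalizedModule.mkLinearMap S M)
    have hφw : φ w ≠ 0 := by
      have heq : φ w = Submodule.Quotient.mk v₀ := rfl
      rw [heq, Ne, Submodule.Quotient.mk_eq_zero]
      exact hvU
    haveI : IsSimpleModule R (V ⧸ U) := isSimpleModule_iff_isCoatom.mpr hU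
    have hsurj : Function.Surjective φ := by
      rcases eq_bot_or_eq_top (LinearMap.range φ) with hbot | htop
      · exfalso
        apply hφw
        have : φ w ∈ LinearMap.range φ := ⟨w, rfl⟩
        rw [hbot] at this
        simpa using this
      · exact LinearMap.range_eq_top.mp htop
    exact ⟨LinearMap.ker φ,
      isSimpleModule_iff_isCoatom.mp
        (IsSimpleModule.congr (φ.quotKerEquivOfSurjective hsurj))⟩

end Aux

/-- Characterizations of Max-rings: the following are equivalent:
(1) every nonzero `R`-module has a maximal submodule;
(2) every nonzero `R`-module has a strongly prime submodule;
(3) every nonzero `R`-module has a prime submodule;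
(4) every nonzero `R`-module has a semiprime submodule. -/
theorem maxRing_tfae (R : Type u) [CommRing R] :
    List.TFAE
      [∀ (M : Type v) [AddCommGroup M] [Module R M], Nontrivial M →
          ∃ P : Submodule R M, IsCoatom P,
       ∀ (M : Type v) [AddCommGroup M] [Module R M], Nontrivial M →
          ∃ P : Submodule R M, P.IsStronglyPrime,
       ∀ (M : Type v) [AddCommGroup M] [Module R M], Nontrivial M →
          ∃ P : Submodule R M, P.IsPrimeSubmodule,
       ∀ (M : Type v) [AddCommGroup M] [Module R M], Nontrivial M →
          ∃ P : Submodule R M, P.IsSemiprimeSubmodule] := by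
  tfae_have 1 → 2 := by
    intro h M _ _ hM
    obtain ⟨P, hP⟩ := h M hM
    exact ⟨P, isStronglyPrime_of_isCoatom hP⟩
  tfae_have 2 → 3 := by
    intro h M _ _ hM
    obtain ⟨P, hP⟩ := h M hM
    exact ⟨P, isPrimeSubmodule_of_isStronglyPrime hP⟩
  tfae_have 3 → 4 := by
    intro h M _ _ hM
    obtain ⟨P, hP⟩ := h M hM
    exact ⟨P, isSemiprimeSubmodule_of_isPrimeSubmodule hP⟩
  tfae_have 4 → 1 := by
    intro h M _ _ hM
    exact exists_coatom_of_semiprime h M hM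
  tfae_finish
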